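/- A point x ∈ X belongs to the projected Aubry set A if and only if the function φ_x = φ(x,·) is a negative weak KAM solution, i.e. φ_x = T⁻φ_x + α[0] on all of X. -/

import Mathlib

open Metric Set Filter Topology

/-- `X` is a `B`-length space at scale `K`. -/
def IsBLengthSpaceAtScale (X : Type*) [MetricSpace X] (B K : ℝ) : Prop :=
  ∀ x y : X, ∃ (n : ℕ) (p : ℕ → X), p 0 = x ∧ p n = y ∧
    (∀ i < n, dist (p i) (p (i + 1)) ≤ K) ∧
    ∑ i ∈ Finset.range n, dist (p i) (p (i + 1)) ≤ B * dist x y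

/-- Uniform superlinearity of the cost `c`. -/
def UniformlySuperlinear {X : Type*} [MetricSpace X] (c : X → X → ℝ) : Prop :=
  ∀ k : ℝ, 0 ≤ k → ∃ C : ℝ, ∀ x y : X, k * dist x y - C ≤ c x y

/-- Uniform boundedness of the cost `c`. -/
def UniformlyBounded {X : Type*} [MetricSpace X] (c : X → X → ℝ) : Prop :=
  ∀ R : ℝ, ∃ A : ℝ, ∀ x y : X, dist x y ≤ R → c x y ≤ A

/-- `u` is `α`-dominated: `u y - u x ≤ c x y + α` for all `x y`. -/
def Dominated {X : Type*} (c : X → X → ℝ) (α : ℝ) (u : X → ℝ) : Prop :=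
  ∀ x y : X, u y - u x ≤ c x y + α

/-- Negative Lax-Oleinik semigroup. -/
noncomputable def Tm {X : Type*} (c : X → X → ℝ) (u : X → ℝ) (x : X) : ℝ :=
  ⨅ y, (u y + c y x)

/-- Positive Lax-Oleinik semigroup. -/
noncomputable def Tp {X : Type*} (c : X → X → ℝ) (u : X → ℝ) (x : X) : ℝ :=
  ⨆ y, (u y - c x y)

/-- The critical constant `α[0]`: the smallest `α` for which `α`-dominated functions exist. -/
noncomputable def critValue {X : Type*} (c : X → X → ℝ) : ℝ :=
  sInf {α : ℝ | ∃ u : X → ℝ, Dominated c α u}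

/-- The Mañé potential `φ(x,y) = sup_u (u y - u x)`, sup over critical sub-solutions. -/
noncomputable def mane {X : Type*} (c : X → X → ℝ) (x y : X) : ℝ :=
  sSup {r : ℝ | ∃ u : X → ℝ, Dominated c (critValue c) u ∧ r = u y - u x}

/-- A bi-infinite sequence is `(u,c,α)`-calibrated if all its finite subchains of
consecutive terms are calibrated. -/
def IsCalibrated {X : Type*} (c : X → X → ℝ) (α : ℝ) (u : X → ℝ) (x : ℤ → X) : Prop :=
  ∀ (m : ℤ) (k : ℕ), u (x (m + k)) =
    u (x m) + (∑ i ∈ Finset.range k, c (x (m + i)) (x (m + i + 1))) + k * α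

/-- The projected Aubry set of a critical sub-solution `u`. -/
def projAubry {X : Type*} (c : X → X → ℝ) (u : X → ℝ) : Set X :=
  {p : X | ∃ x : ℤ → X, IsCalibrated c (critValue c) u x ∧ x 0 = p}

/-- The set `Â_u` of pairs of consecutive terms of calibrated bi-infinite sequences. -/
def aubryPairs {X : Type*} (c : X → X → ℝ) (u : X → ℝ) : Set (X × X) :=
  {q : X × X | ∃ (x : ℤ → X) (n : ℤ),
    IsCalibrated c (critValue c) u x ∧ x n = q.1 ∧ x (n + 1) = q.2}

/-- The projected Aubry set `A = ∩_u A_u`, intersection over all critical sub-solutions. -/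
def projAubrySet {X : Type*} (c : X → X → ℝ) : Set X :=
  {p : X | ∀ u : X → ℝ, Dominated c (critValue c) u → p ∈ projAubry c u}

/-- The Aubry pair set `Â = ∩_u Â_u`, intersection over all critical sub-solutions. -/
def aubryPairsSet {X : Type*} (c : X → X → ℝ) : Set (X × X) :=
  {q : X × X | ∀ u : X → ℝ, Dominated c (critValue c) u → q ∈ aubryPairs c u}

/-- `c_n(x,y)`: infimum of total cost over chains of length `n` from `x` to `y`. -/
noncomputable def cChain {X : Type*} (c : X → X → ℝ) (n : ℕ) (x y : X) : ℝ :=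
  sInf {r : ℝ | ∃ p : ℕ → X, p 0 = x ∧ p n = y ∧
    r = ∑ i ∈ Finset.range n, c (p i) (p (i + 1))}

/-- `φ_n(x,y) = inf_{k ≥ n} (c_k(x,y) + k·α)`. -/
noncomputable def phiN {X : Type*} (c : X → X → ℝ) (α : ℝ) (n : ℕ) (x y : X) : ℝ :=
  sInf {r : ℝ | ∃ k : ℕ, n ≤ k ∧ r = cChain c k x y + k * α}

/-- The Peierls barrier, with values in the extended reals. -/
noncomputable def peierls {X : Type*} (c : X → X → ℝ) (α : ℝ) (x y : X) : EReal :=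
  Filter.liminf (fun n : ℕ => ((cChain c n x y + n * α : ℝ) : EReal)) Filter.atTop

/-- Negative Lax-Oleinik semigroup on extended-real-valued functions. -/
noncomputable def eTm {X : Type*} (c : X → X → ℝ) (u : X → EReal) (x : X) : EReal :=
  ⨅ y, (u y + (c y x : EReal))

/-- Positive Lax-Oleinik semigroup on extended-real-valued functions. -/
noncomputable def eTp {X : Type*} (c : X → X → ℝ) (u : X → EReal) (x : X) : EReal :=
  ⨆ y, (u y - (c x y : EReal))

section AubryAux

open Finset Filter
set_option linter.unusedSectionVars false

variable {X : Type*} [MetricSpace X] [Nonempty X] {c : X → X → ℝ}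

private lemma sum_range_add' (f : ℕ → ℝ) (m n : ℕ) :
    ∑ i ∈ Finset.range (m + n), f i
      = ∑ i ∈ Finset.range m, f i + ∑ i ∈ Finset.range n, f (m + i) := by
  induction n with
  | zero => simp
  | succ n ih =>
      rw [show m + (n+1) = (m+n)+1 from rfl, Finset.sum_range_succ, ih,
        Finset.sum_range_succ]
      ring

/-- partial sums over ℤ with base point 0 -/
private noncomputable def intA (g : ℤ → ℝ) (i : ℤ) : ℝ :=
  (∑ l ∈ Finset.range i.toNat, g l) - ∑ l ∈ Finset.range (-i).toNat, g (i + l)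

private lemma intA_zero (g : ℤ → ℝ) : intA g 0 = 0 := by simp [intA]

private lemma intA_succ (g : ℤ → ℝ) (i : ℤ) : intA g (i + 1) = intA g i + g i := by
  rcases le_or_gt 0 i with hi | hi
  · have h1 : (i+1).toNat = i.toNat + 1 := by omega
    have h2 : (-i).toNat = 0 := by omega
    have h3 : (-(i+1)).toNat = 0 := by omega
    have h4 : (i.toNat : ℤ) = i := by omega
    rw [intA, intA, h1, h2, h3, Finset.sum_range_succ, h4]
    simp
  · have h1 : (i+1).toNat = 0 := by omega
    have h2 : i.toNat = 0 := by omega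
    have h3 : (-i).toNat = (-(i+1)).toNat + 1 := by omega
    rw [intA, intA, h1, h2, h3, Finset.sum_range_succ']
    have h5 : ∀ l : ℕ, g (i + (l + 1 : ℕ)) = g (i + 1 + l) := by
      intro l; congr 1; push_cast; ring
    rw [Finset.sum_congr rfl (fun l _ => h5 l)]
    simp

private lemma intA_window (g : ℤ → ℝ) (m : ℤ) (k : ℕ) :
    intA g (m + k) = intA g m + ∑ l ∈ Finset.range k, g (m + l) := by
  induction k with
  | zero => simp
  | succ k ih =>
      have : (m + (k+1 : ℕ) : ℤ) = (m + k) + 1 := by push_cast; ring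
      rw [this, intA_succ, ih, Finset.sum_range_succ]
      ring

/-- telescoped domination along a chain -/
private lemma dom_chain_le {α : ℝ} {u : X → ℝ} (hu : Dominated c α u) (p : ℕ → X) (n : ℕ) :
    u (p n) - u (p 0) ≤ (∑ i ∈ Finset.range n, c (p i) (p (i+1))) + n * α := by
  induction n with
  | zero => simp
  | succ n ih =>
      have h := hu (p n) (p (n+1))
      rw [Finset.sum_range_succ]
      push_cast
      linarith

private lemma domSet_nonempty (hsl : UniformlySuperlinear c) :
    {α : ℝ | ∃ u : X → ℝ, Dominated c α u}.Nonempty := by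
  obtain ⟨C, hC⟩ := hsl 0 le_rfl
  exact ⟨C, 0, fun a b => by have := hC a b; simp at this ⊢; linarith⟩

private lemma domSet_bddBelow :
    BddBelow {α : ℝ | ∃ u : X → ℝ, Dominated c α u} := by
  obtain ⟨x₀⟩ := ‹Nonempty X›
  refine ⟨-c x₀ x₀, fun α hα => ?_⟩
  obtain ⟨u, hu⟩ := hα
  have := hu x₀ x₀
  linarith

private lemma exists_dom_add_pos (hsl : UniformlySuperlinear c) {ε : ℝ} (hε : 0 < ε) :
    ∃ u : X → ℝ, Dominated c (critValue c + ε) u := by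
  obtain ⟨β, hβ, hlt⟩ := Real.lt_sInf_add_pos (domSet_nonempty hsl) hε
  obtain ⟨u, hu⟩ := hβ
  have hcv : critValue c = sInf {α : ℝ | ∃ u : X → ℝ, Dominated c α u} := rfl
  exact ⟨u, fun a b => le_trans (hu a b) (by rw [hcv]; linarith)⟩

private lemma ulim {Y : Type*} [TopologicalSpace Y] [T2Space Y] (U : Ultrafilter ℕ) {s : Set Y}
    (hs : IsCompact s) {f : ℕ → Y} (hf : ∀ n, f n ∈ s) :
    ∃ a, Filter.Tendsto f U (𝓝 a) := by
  obtain ⟨a, -, ha⟩ := hs.ultrafilter_le_nhds (U.map f)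
    (by rw [Ultrafilter.coe_map, Filter.le_principal_iff, Filter.mem_map]
        exact Filter.Eventually.of_forall hf)
  exact ⟨a, ha⟩

/-- existence of a critical sub-solution -/
private lemma exists_crit (hsl : UniformlySuperlinear c) :
    ∃ u : X → ℝ, Dominated c (critValue c) u := by
  obtain ⟨x₀⟩ := ‹Nonempty X›
  obtain ⟨U, hU⟩ := Filter.exists_ultrafilter_le (Filter.atTop : Filter ℕ)
  set α := critValue c with hα
  have hsel : ∀ n : ℕ, ∃ u : X → ℝ, Dominated c (α + 1/(n+1)) u := fun n =>
    exists_dom_add_pos hsl (by positivity)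
  choose u hu using hsel
  set v : ℕ → X → ℝ := fun n y => u n y - u n x₀ with hv
  have hbound : ∀ y n, v n y ∈ Set.Icc (-(c y x₀ + α + 1)) (c x₀ y + α + 1) := by
    intro y n
    have h1 := hu n x₀ y
    have h2 := hu n y x₀
    have h3 : 1/((n:ℝ)+1) ≤ 1 := by
      rw [div_le_one (by positivity)]; linarith [Nat.cast_nonneg (α := ℝ) n]
    constructor
    · simp only [hv]; linarith
    · simp only [hv]; linarith
  have hlim : ∀ y : X, ∃ a : ℝ, Filter.Tendsto (fun n => v n y) U (𝓝 a) := by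
    intro y
    exact ulim U isCompact_Icc (fun n => hbound y n)
  choose F hF using hlim
  refine ⟨F, fun a b => ?_⟩
  have h1 : Filter.Tendsto (fun n => v n b - v n a) U (𝓝 (F b - F a)) := (hF b).sub (hF a)
  have h2 : Filter.Tendsto (fun n : ℕ => c a b + α + 1/(n+1)) U (𝓝 (c a b + α)) := by
    have := (tendsto_one_div_add_atTop_nhds_zero_nat (𝕜 := ℝ)).mono_left hU
    simpa using (tendsto_const_nhds (x := c a b + α)).add this
  have hle : ∀ n, v n b - v n a ≤ c a b + α + 1/(n+1) := by
    intro n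
    have := hu n a b
    simp only [hv]
    linarith
  have := le_of_tendsto_of_tendsto' h1 h2 hle
  linarith

private def chainSet (c : X → X → ℝ) (α : ℝ) (a b : X) : Set ℝ :=
  {r | ∃ (n : ℕ) (p : ℕ → X), p 0 = a ∧ p n = b ∧
    r = (∑ i ∈ Finset.range n, c (p i) (p (i+1))) + n * α}

private noncomputable def pot (c : X → X → ℝ) (α : ℝ) (a b : X) : ℝ :=
  sInf (chainSet c α a b)

private lemma chainSet_nonempty (α : ℝ) (a b : X) : (chainSet c α a b).Nonempty := by
  refine ⟨c a b + 1 * α, 1, fun i => if i = 0 then a else b, by simp, by simp, ?_⟩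
  simp

private lemma chainSet_lb {α : ℝ} {u : X → ℝ} (hu : Dominated c α u) {a b : X} :
    ∀ r ∈ chainSet c α a b, u b - u a ≤ r := by
  rintro r ⟨n, p, h0, hn, rfl⟩
  have := dom_chain_le hu p n
  rw [h0, hn] at this
  exact this

private lemma chainSet_bdd {α : ℝ} {u : X → ℝ} (hu : Dominated c α u) {a b : X} :
    BddBelow (chainSet c α a b) :=
  ⟨u b - u a, fun r hr => chainSet_lb hu r hr⟩

private lemma le_pot {α : ℝ} {u : X → ℝ} (hu : Dominated c α u) (a b : X) :
    u b - u a ≤ pot c α a b :=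
  le_csInf (chainSet_nonempty α a b) (chainSet_lb hu)

private lemma pot_le {α : ℝ} {u : X → ℝ} (hu : Dominated c α u) {a b : X} {r : ℝ}
    (hr : r ∈ chainSet c α a b) : pot c α a b ≤ r :=
  csInf_le (chainSet_bdd hu) hr

private lemma chainSet_extend {α : ℝ} {a z b : X} {r : ℝ} (hr : r ∈ chainSet c α a z) :
    r + c z b + α ∈ chainSet c α a b := by
  obtain ⟨n, p, h0, hn, rfl⟩ := hr
  refine ⟨n + 1, fun i => if i ≤ n then p i else b, by simp [h0], by simp, ?_⟩
  rw [Finset.sum_range_succ]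
  have hagree : ∀ i ∈ Finset.range n,
      c (if i ≤ n then p i else b) (if i + 1 ≤ n then p (i+1) else b) = c (p i) (p (i+1)) := by
    intro i hi
    rw [Finset.mem_range] at hi
    rw [if_pos (by omega), if_pos (by omega)]
  rw [Finset.sum_congr rfl hagree]
  simp only [if_pos (le_refl n), if_neg (Nat.not_succ_le_self n), hn]
  push_cast
  ring

private lemma pot_self {α : ℝ} {u : X → ℝ} (hu : Dominated c α u) (a : X) :
    pot c α a a = 0 := by
  refine le_antisymm (pot_le hu ⟨0, fun _ => a, rfl, rfl, by simp⟩) ?_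
  have := le_pot hu a a
  linarith

private lemma pot_dom {α : ℝ} {u : X → ℝ} (hu : Dominated c α u) (a : X) :
    Dominated c α (pot c α a) := by
  intro z y
  have : pot c α a y - c z y - α ≤ pot c α a z := by
    refine le_csInf (chainSet_nonempty α a z) (fun r hr => ?_)
    have := pot_le hu (chainSet_extend (b := y) hr)
    linarith
  linarith

private lemma mane_eq_pot (hsl : UniformlySuperlinear c) (a b : X) :
    mane c a b = pot c (critValue c) a b := by
  obtain ⟨u₀, hu₀⟩ := exists_crit (c := c) hsl
  have hne : {r : ℝ | ∃ u : X → ℝ, Dominated c (critValue c) u ∧ r = u b - u a}.Nonempty :=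
    ⟨u₀ b - u₀ a, u₀, hu₀, rfl⟩
  have hbdd : BddAbove {r : ℝ | ∃ u : X → ℝ, Dominated c (critValue c) u ∧ r = u b - u a} := by
    refine ⟨pot c (critValue c) a b, ?_⟩
    rintro r ⟨u, hu, rfl⟩
    exact le_pot hu a b
  refine le_antisymm (csSup_le hne ?_) ?_
  · rintro r ⟨u, hu, rfl⟩
    exact le_pot hu a b
  · have hmem : pot c (critValue c) a b - pot c (critValue c) a a
        ∈ {r : ℝ | ∃ u : X → ℝ, Dominated c (critValue c) u ∧ r = u b - u a} :=
      ⟨pot c (critValue c) a, pot_dom hu₀ a, rfl⟩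
    have := le_csSup hbdd hmem
    rw [pot_self hu₀ a] at this
    rw [mane]
    linarith

private lemma mane_dom (hsl : UniformlySuperlinear c) (a : X) :
    Dominated c (critValue c) (mane c a) := by
  obtain ⟨u₀, hu₀⟩ := exists_crit (c := c) hsl
  have : mane c a = pot c (critValue c) a := funext fun b => mane_eq_pot hsl a b
  rw [this]
  exact pot_dom hu₀ a

private lemma mane_self (hsl : UniformlySuperlinear c) (a : X) : mane c a a = 0 := by
  obtain ⟨u₀, hu₀⟩ := exists_crit (c := c) hsl
  rw [mane_eq_pot hsl a a, pot_self hu₀ a]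

private lemma loop_nonneg {α : ℝ} {u : X → ℝ} (hu : Dominated c α u) {a : X} {n : ℕ} {p : ℕ → X}
    (h0 : p 0 = a) (hn : p n = a) :
    0 ≤ (∑ i ∈ Finset.range n, c (p i) (p (i+1))) + n * α := by
  have := dom_chain_le hu p n
  rw [h0, hn] at this
  linarith

private lemma chain_bound {α M K : ℝ} (hK : 0 < K) {A_K : ℝ}
    (hA : ∀ x y : X, dist x y ≤ K → c x y ≤ A_K) (hM : A_K + α ≤ M) (hM0 : 0 ≤ M)
    {u : X → ℝ} (hu : Dominated c α u) :
    ∀ n : ℕ, ∀ p : ℕ → X, (∀ i < n, dist (p i) (p (i+1)) ≤ K) →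
      u (p n) - u (p 0) ≤ (2*M/K) * (∑ i ∈ Finset.range n, dist (p i) (p (i+1))) + M := by
  intro n
  induction n using Nat.strong_induction_on with
  | _ n IH =>
    intro p hp
    classical
    have hSum0 : (0:ℝ) ≤ ∑ i ∈ Finset.range n, dist (p i) (p (i+1)) :=
      Finset.sum_nonneg (fun i _ => dist_nonneg)
    by_cases hS : (∑ i ∈ Finset.range n, dist (p i) (p (i+1))) ≤ K
    · have hd : dist (p 0) (p n) ≤ K := le_trans (dist_le_range_sum_dist p n) hS
      have h1 : u (p n) - u (p 0) ≤ M := le_trans (hu (p 0) (p n)) (by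
        have := hA (p 0) (p n) hd; linarith)
      have h2 : 0 ≤ (2*M/K) * (∑ i ∈ Finset.range n, dist (p i) (p (i+1))) := by positivity
      linarith
    · push_neg at hS
      have hex : ∃ t, K < ∑ i ∈ Finset.range t, dist (p i) (p (i+1)) := ⟨n, hS⟩
      have ht : K < ∑ i ∈ Finset.range (Nat.find hex), dist (p i) (p (i+1)) := Nat.find_spec hex
      have htn : Nat.find hex ≤ n := Nat.find_min' hex hS
      have ht1 : 1 ≤ Nat.find hex := by
        rcases Nat.eq_zero_or_pos (Nat.find hex) with h | h
        · exfalso; rw [h] at ht; simp at ht; linarith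
        · exact h
      obtain ⟨s, hts⟩ : ∃ s, Nat.find hex = s + 1 := ⟨Nat.find hex - 1, by omega⟩
      rw [hts] at ht htn
      have hmin : ∑ i ∈ Finset.range s, dist (p i) (p (i+1)) ≤ K := by
        have := Nat.find_min hex (m := s) (by omega)
        push_neg at this
        exact this
      have hds : dist (p 0) (p s) ≤ K := le_trans (dist_le_range_sum_dist p s) hmin
      have h1 : u (p s) - u (p 0) ≤ M := le_trans (hu (p 0) (p s)) (by
        have := hA (p 0) (p s) hds; linarith)
      have h2 : u (p (s+1)) - u (p s) ≤ M := le_trans (hu (p s) (p (s+1))) (by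
        have := hA (p s) (p (s+1)) (hp s (by omega)); linarith)
      set n' := n - (s+1) with hn'
      have hnsplit : n = (s+1) + n' := by omega
      have IH' := IH n' (by omega) (fun i => p (s+1+i)) (fun i hi => by
        have := hp (s+1+i) (by omega)
        simpa [Nat.add_assoc] using this)
      have hpn : (fun i => p (s + 1 + i)) n' = p n := by show p (s+1+n') = p n; rw [hnsplit]
      have hp0 : (fun i => p (s + 1 + i)) 0 = p (s + 1) := by norm_num
      rw [show p (s + 1 + n') = p n from hpn, show p (s + 1 + 0) = p (s + 1) from hp0] at IH'
      simp only [← Nat.add_assoc] at IH'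
      have hsplit : ∑ i ∈ Finset.range n, dist (p i) (p (i+1))
          = (∑ i ∈ Finset.range (s+1), dist (p i) (p (i+1)))
            + ∑ i ∈ Finset.range n', dist (p (s+1+i)) (p (s+1+i+1)) := by
        rw [hnsplit, sum_range_add' (fun i => dist (p i) (p (i+1))) (s+1) n']
      have hTail : ∑ i ∈ Finset.range n', dist (p (s+1+i)) (p (s+1+i+1))
          ≤ (∑ i ∈ Finset.range n, dist (p i) (p (i+1))) - K := by
        rw [hsplit]; linarith
      have hmul : (2*M/K) * (∑ i ∈ Finset.range n', dist (p (s+1+i)) (p (s+1+i+1)))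
          ≤ (2*M/K) * ((∑ i ∈ Finset.range n, dist (p i) (p (i+1))) - K) :=
        mul_le_mul_of_nonneg_left hTail (by positivity)
      have hKM : (2*M/K) * ((∑ i ∈ Finset.range n, dist (p i) (p (i+1))) - K)
          = (2*M/K) * (∑ i ∈ Finset.range n, dist (p i) (p (i+1))) - 2*M := by
        field_simp
      have hsteps' : ∀ i < n', dist (p (s+1+i)) (p (s+1+i+1)) ≤ K := fun i hi =>
        hp (s+1+i) (by omega)
      linarith

private lemma lip {B K : ℝ} (hK : 0 < K) (hlen : IsBLengthSpaceAtScale X B K)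
    (hub : UniformlyBounded c) :
    ∃ k₁ C₁ : ℝ, 0 ≤ k₁ ∧ 0 ≤ C₁ ∧ ∀ u : X → ℝ, Dominated c (critValue c) u →
      ∀ a b : X, u b - u a ≤ k₁ * dist a b + C₁ := by
  obtain ⟨A_K, hA⟩ := hub K
  set M := max 0 (A_K + critValue c) with hM
  have hM0 : 0 ≤ M := le_max_left _ _
  refine ⟨2*M/K*(max 0 B), M, by positivity, hM0, ?_⟩
  intro u hu a b
  obtain ⟨n, p, h0, hn, hsteps, hsum⟩ := hlen a b
  have hcb := chain_bound hK hA (le_max_right _ _) hM0 hu n p hsteps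
  rw [h0, hn] at hcb
  have hsum' : ∑ i ∈ Finset.range n, dist (p i) (p (i+1)) ≤ (max 0 B) * dist a b := by
    refine le_trans hsum ?_
    exact mul_le_mul_of_nonneg_right (le_max_right _ _) dist_nonneg
  have h2 : (2*M/K) * (∑ i ∈ Finset.range n, dist (p i) (p (i+1)))
      ≤ (2*M/K) * ((max 0 B) * dist a b) := mul_le_mul_of_nonneg_left hsum' (by positivity)
  have h3 : (2*M/K) * ((max 0 B) * dist a b) = 2*M/K*(max 0 B) * dist a b := by ring
  linarith

private lemma P_of_RHS (hsl : UniformlySuperlinear c) (x : X)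
    (h : mane c x x = Tm c (mane c x) x + critValue c) :
    ∀ ε > 0, ∃ z : X, pot c (critValue c) x z + c z x + critValue c < ε := by
  intro ε hε
  have h0 : mane c x x = 0 := mane_self hsl x
  have hTm : Tm c (mane c x) x = -critValue c := by rw [h0] at h; linarith
  have hlt : (⨅ z, (mane c x z + c z x)) < -critValue c + ε := by
    rw [show (⨅ z, (mane c x z + c z x)) = Tm c (mane c x) x from rfl, hTm]; linarith
  obtain ⟨z, hz⟩ := exists_lt_of_ciInf_lt hlt
  refine ⟨z, ?_⟩
  rw [← mane_eq_pot hsl]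
  linarith

private lemma RHS_of_P (hsl : UniformlySuperlinear c) (x : X)
    (hP : ∀ ε > 0, ∃ z : X, pot c (critValue c) x z + c z x + critValue c < ε) :
    ∀ y : X, mane c x y = Tm c (mane c x) y + critValue c := by
  obtain ⟨u₀, hu₀⟩ := exists_crit (c := c) hsl
  intro y
  have hbdd : BddBelow (Set.range fun z => mane c x z + c z y) := by
    refine ⟨(u₀ y - u₀ x) - critValue c, ?_⟩
    rintro r ⟨z, rfl⟩
    have h1 : u₀ z - u₀ x ≤ mane c x z := by
      rw [mane_eq_pot hsl]; exact le_pot hu₀ x z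
    have h2 : u₀ y - u₀ z ≤ c z y + critValue c := hu₀ z y
    simp only []
    linarith
  have hge : mane c x y - critValue c ≤ ⨅ z, (mane c x z + c z y) := by
    refine le_ciInf fun z => ?_
    have := mane_dom hsl x z y
    linarith
  have hle : (⨅ z, (mane c x z + c z y)) ≤ mane c x y - critValue c := by
    by_cases hxy : y = x
    · refine le_of_forall_pos_le_add ?_
      intro ε hε
      obtain ⟨z, hz⟩ := hP ε hε
      have h1 : (⨅ z, (mane c x z + c z y)) ≤ mane c x z + c z y := ciInf_le hbdd z
      rw [hxy] at h1 ⊢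
      rw [mane_self hsl x]
      rw [mane_eq_pot hsl] at h1
      linarith
    · refine le_of_forall_pos_le_add ?_
      intro ε hε
      have hpotlt : pot c (critValue c) x y < pot c (critValue c) x y + ε := by linarith
      obtain ⟨r, hrmem, hrlt⟩ :=
        exists_lt_of_csInf_lt (chainSet_nonempty (critValue c) x y) hpotlt
      obtain ⟨n, p, h0, hn, rfl⟩ := hrmem
      obtain ⟨m, rfl⟩ : ∃ m, n = m + 1 := by
        cases n with
        | zero => exact absurd (hn ▸ h0.symm ▸ rfl) hxy
        | succ m => exact ⟨m, rfl⟩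
      have hzmem : (∑ i ∈ Finset.range m, c (p i) (p (i+1))) + m * critValue c
          ∈ chainSet c (critValue c) x (p m) := ⟨m, p, h0, rfl, rfl⟩
      have h1 : mane c x (p m) ≤ (∑ i ∈ Finset.range m, c (p i) (p (i+1))) + m * critValue c := by
        rw [mane_eq_pot hsl]; exact pot_le hu₀ hzmem
      have h2 : (⨅ z, (mane c x z + c z y)) ≤ mane c x (p m) + c (p m) y := ciInf_le hbdd (p m)
      rw [Finset.sum_range_succ, hn] at hrlt
      rw [mane_eq_pot hsl x y]
      push_cast at hrlt
      linarith
  have hTm : Tm c (mane c x) y = ⨅ z, (mane c x z + c z y) := rfl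
  rw [hTm]
  linarith

private lemma P_of_LHS (hsl : UniformlySuperlinear c) (x : X) (hx : x ∈ projAubrySet c) :
    ∀ ε > 0, ∃ z : X, pot c (critValue c) x z + c z x + critValue c < ε := by
  intro ε hε
  obtain ⟨w, hw, hw0⟩ := hx (mane c x) (mane_dom hsl x)
  have h := hw (-1) 1
  rw [Finset.sum_range_one] at h
  norm_num at h
  rw [hw0] at h
  rw [mane_self hsl x] at h
  refine ⟨w (-1), ?_⟩
  rw [← mane_eq_pot hsl]
  linarith

private lemma chainSet_extend_len {α : ℝ} {a z b : X} {r : ℝ} (hr : r ∈ chainSet c α a z) :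
    ∃ (n : ℕ) (p : ℕ → X), 1 ≤ n ∧ p 0 = a ∧ p n = b ∧
      r + c z b + α = (∑ i ∈ Finset.range n, c (p i) (p (i+1))) + n * α := by
  obtain ⟨n, p, h0, hn, rfl⟩ := hr
  refine ⟨n + 1, fun i => if i ≤ n then p i else b, by omega, by simp [h0], by simp, ?_⟩
  rw [Finset.sum_range_succ]
  have hagree : ∀ i ∈ Finset.range n,
      c (if i ≤ n then p i else b) (if i + 1 ≤ n then p (i+1) else b) = c (p i) (p (i+1)) := by
    intro i hi
    rw [Finset.mem_range] at hi
    rw [if_pos (by omega), if_pos (by omega)]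
  rw [Finset.sum_congr rfl hagree]
  simp only [if_pos (le_refl n), if_neg (Nat.not_succ_le_self n), hn]
  push_cast
  ring

private lemma intA_window_c {α : ℝ} {z : ℤ → X} {g : ℤ → ℝ}
    (hg : ∀ i, g i = c (z i) (z (i+1)) + α) (m : ℤ) (k : ℕ) :
    intA g (m + k) - intA g m = ∑ t ∈ Finset.range k, (c (z (m+t)) (z (m+t+1)) + α) := by
  rw [intA_window g m k]
  simp only [hg]
  ring

private lemma seq_chain_mem {α : ℝ} {z : ℤ → X} {g : ℤ → ℝ}
    (hg : ∀ i, g i = c (z i) (z (i+1)) + α) (m : ℤ) (L : ℕ) :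
    intA g (m + L) - intA g m ∈ chainSet c α (z m) (z (m + L)) := by
  refine ⟨L, fun t => z (m + t), by norm_num, rfl, ?_⟩
  rw [intA_window_c hg m L]
  have hterm : ∀ t ∈ Finset.range L,
      c (z (m + t)) (z (m + ((t+1:ℕ):ℤ))) = c (z (m+t)) (z (m+t+1)) := by
    intro t _
    congr 1
    push_cast
    ring
  rw [Finset.sum_congr rfl hterm, Finset.sum_add_distrib, Finset.sum_const,
    Finset.card_range, nsmul_eq_mul]

private lemma chain_replace_last {α : ℝ} {z : ℤ → X} {g : ℤ → ℝ}
    (hg : ∀ i, g i = c (z i) (z (i+1)) + α) (m : ℤ) {L : ℕ} (hL : 1 ≤ L) (b : X) :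
    intA g (m + L) - intA g m - c (z (m + L - 1)) (z (m + L)) + c (z (m + L - 1)) b
      ∈ chainSet c α (z m) b := by
  classical
  obtain ⟨L', rfl⟩ : ∃ L', L = L' + 1 := ⟨L - 1, by omega⟩
  refine ⟨L' + 1, fun t => if t = L' + 1 then b else z (m + t), by norm_num, by norm_num, ?_⟩
  rw [Finset.sum_range_succ]
  have hterm : ∀ t ∈ Finset.range L',
      c (if t = L'+1 then b else z (m + t)) (if t+1 = L'+1 then b else z (m + ((t+1:ℕ):ℤ)))
        = c (z (m+t)) (z (m+t+1)) := by
    intro t ht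
    rw [Finset.mem_range] at ht
    rw [if_neg (by omega), if_neg (by omega)]
    congr 1
    push_cast
    ring
  rw [Finset.sum_congr rfl hterm]
  simp only [if_neg (by omega : ¬ L' = L' + 1), if_pos rfl]
  have e2 : m + ((L'+1:ℕ):ℤ) - 1 = m + L' := by push_cast; ring
  have e1 : (m + ((L'+1:ℕ):ℤ)) = m + L' + 1 := by push_cast; ring
  rw [intA_window_c hg m (L'+1), Finset.sum_range_succ, e2, e1,
    Finset.sum_add_distrib, Finset.sum_const, Finset.card_range, nsmul_eq_mul]
  push_cast
  ring

private lemma chain_replace_first {α : ℝ} {z : ℤ → X} {g : ℤ → ℝ}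
    (hg : ∀ i, g i = c (z i) (z (i+1)) + α) (m : ℤ) {L : ℕ} (hL : 1 ≤ L) (a : X) :
    c a (z (m + 1)) + (intA g (m + L) - intA g (m + 1)) + α ∈ chainSet c α a (z (m + L)) := by
  classical
  obtain ⟨L', rfl⟩ : ∃ L', L = L' + 1 := ⟨L - 1, by omega⟩
  refine ⟨L' + 1, fun t => if t = 0 then a else z (m + t), by norm_num, by norm_num, ?_⟩
  rw [Finset.sum_range_succ']
  have hterm : ∀ t ∈ Finset.range L',
      c (if t+1 = 0 then a else z (m + ((t+1:ℕ):ℤ))) (if t+2 = 0 then a else z (m + ((t+2:ℕ):ℤ)))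
        = c (z (m+1+t)) (z (m+1+t+1)) := by
    intro t ht
    rw [if_neg (by omega), if_neg (by omega)]
    congr 1 <;> push_cast <;> ring
  rw [Finset.sum_congr rfl hterm]
  simp only [if_pos rfl, if_neg (by omega : ¬ (0:ℕ)+1 = 0)]
  have e1 : (m + ((L'+1:ℕ):ℤ)) = (m+1) + L' := by push_cast; ring
  have e2 : (m + ((0+1:ℕ):ℤ)) = m + 1 := by push_cast; ring
  rw [e1, intA_window_c hg (m+1) L', e2,
    Finset.sum_add_distrib, Finset.sum_const, Finset.card_range, nsmul_eq_mul]
  push_cast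
  ring

private lemma per_step {n : ℕ} (hn1 : 1 ≤ n) {p : ℕ → X} {x : X} (hp0 : p 0 = x)
    (hpn : p n = x) (i : ℤ) :
    ∃ l : ℕ, l < n ∧ p ((i % (n:ℤ)).toNat) = p l ∧ p (((i+1) % (n:ℤ)).toNat) = p (l+1) := by
  have hn0 : 0 < (n:ℤ) := by exact_mod_cast hn1
  have h1 : 0 ≤ i % n := Int.emod_nonneg i (by omega)
  have h2 : i % n < n := Int.emod_lt_of_pos i hn0
  have key0 : ((i % n) + 1) % n = (i + 1) % n := by
    conv_rhs => rw [← Int.emod_add_mul_ediv i n]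
    rw [show i % n + n * (i / n) + 1 = (i % n + 1) + n * (i / n) by ring,
      Int.add_mul_emod_self_left]
  refine ⟨(i % (n:ℤ)).toNat, by omega, rfl, ?_⟩
  rcases lt_or_eq_of_le (by omega : i % n + 1 ≤ n) with hlt | heq
  · have : (i + 1) % (n:ℤ) = i % n + 1 := by
      rw [← key0, Int.emod_eq_of_lt (by omega) hlt]
    rw [this]
    congr 1
    omega
  · have : (i + 1) % (n:ℤ) = 0 := by
      rw [← key0, heq, Int.emod_self]
    rw [this]
    have h3 : ((0:ℤ)).toNat = 0 := rfl
    rw [h3, hp0]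
    have h4 : (i % (n:ℤ)).toNat + 1 = n := by omega
    rw [h4, hpn]

private lemma per_shift {n : ℕ} (i : ℤ) :
    ((i + (n:ℤ)) % (n:ℤ)).toNat = (i % (n:ℤ)).toNat := by
  rw [show i + (n:ℤ) = i + (n:ℤ) * 1 by ring, Int.add_mul_emod_self_left]

private lemma per_mul {n : ℕ} (k : ℤ) : (((n:ℤ) * k) % (n:ℤ)).toNat = 0 := by
  rw [Int.mul_emod_right]
  rfl

private lemma per_nat {n : ℕ} (hn1 : 1 ≤ n) {p : ℕ → X} {x : X} (hp0 : p 0 = x)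
    (hpn : p n = x) (t : ℕ) (ht : t ≤ n) :
    p (((t:ℤ) % (n:ℤ)).toNat) = p t := by
  rcases lt_or_eq_of_le ht with hlt | rfl
  · have h5 : ((t:ℤ) % (n:ℤ)) = t := Int.emod_eq_of_lt (by omega) (by exact_mod_cast hlt)
    rw [h5]
    norm_num
  · have h5 : ((t:ℤ) % (t:ℤ)) = 0 := Int.emod_self
    rw [h5]
    rw [show ((0:ℤ)).toNat = 0 from rfl, hp0, hpn]

private lemma construct [ProperSpace X] {B K : ℝ} (hK : 0 < K)
    (hlen : IsBLengthSpaceAtScale X B K)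
    (hcont : Continuous fun q : X × X => c q.1 q.2)
    (hsl : UniformlySuperlinear c) (hub : UniformlyBounded c) (x : X)
    (hP : ∀ ε > 0, ∃ z : X, pot c (critValue c) x z + c z x + critValue c < ε) :
    ∃ (y : ℤ → X) (A : ℤ → ℝ), y 0 = x ∧ A 0 = 0 ∧
      (∀ i : ℤ, A (i+1) = A i + (c (y i) (y (i+1)) + critValue c)) ∧
      (∀ i : ℤ, pot c (critValue c) x (y i) ≤ A i ∧ pot c (critValue c) (y i) x ≤ -A i) := by
  classical
  obtain ⟨u₀, hu₀⟩ := exists_crit (c := c) hsl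
  obtain ⟨k₁, C₁, hk₁0, hC₁0, hlip⟩ := lip hK hlen hub
  obtain ⟨C₂, hC₂⟩ := hsl (k₁ + 1) (by linarith)
  set α := critValue c with hαdef
  set R₀ := max 0 (C₂ + C₁ - α + 1) with hR₀def
  have hR₀0 : 0 ≤ R₀ := le_max_left _ _
  have step_bound : ∀ a b : X, c a b + α ≤ u₀ b - u₀ a + 1 → dist a b ≤ R₀ := by
    intro a b h
    have h1 := hC₂ a b
    have h2 := hlip u₀ hu₀ a b
    have h3 : dist a b ≤ C₂ + C₁ - α + 1 := by linarith
    exact le_trans h3 (le_max_right _ _)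
  have hdefect : ∀ (n : ℕ) (p : ℕ → X), p 0 = x → p n = x →
      (∑ i ∈ Finset.range n, c (p i) (p (i+1))) + n * α ≤ 1 →
      ∀ l, l < n → dist (p l) (p (l+1)) ≤ R₀ := by
    intro n p h0 hn hval l hl
    have hD0 : ∀ t, 0 ≤ c (p t) (p (t+1)) + α - (u₀ (p (t+1)) - u₀ (p t)) := fun t => by
      have := hu₀ (p t) (p (t+1)); linarith
    have hDsum : ∑ t ∈ Finset.range n, (c (p t) (p (t+1)) + α - (u₀ (p (t+1)) - u₀ (p t)))
        = (∑ t ∈ Finset.range n, c (p t) (p (t+1))) + n * α - (u₀ (p n) - u₀ (p 0)) := by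
      rw [Finset.sum_sub_distrib, Finset.sum_add_distrib, Finset.sum_const, Finset.card_range,
        nsmul_eq_mul, Finset.sum_range_sub (fun t => u₀ (p t))]
    have hDl := Finset.single_le_sum (f := fun t => c (p t) (p (t+1)) + α - (u₀ (p (t+1)) - u₀ (p t)))
      (fun t _ => hD0 t) (Finset.mem_range.mpr hl)
    rw [hDsum, h0, hn] at hDl
    apply step_bound
    simp only [sub_self] at hDl
    linarith
  have hloops : ∀ ε > 0, ∃ (n : ℕ) (p : ℕ → X), 1 ≤ n ∧ p 0 = x ∧ p n = x ∧
      (∑ i ∈ Finset.range n, c (p i) (p (i+1))) + n * α < ε := by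
    intro ε hε
    obtain ⟨w, hw⟩ := hP ε hε
    obtain ⟨r, hrmem, hrlt⟩ := exists_lt_of_csInf_lt (chainSet_nonempty α x w)
      (show pot c α x w < pot c α x w + (ε - (pot c α x w + c w x + α)) by linarith)
    obtain ⟨n, p, hn1, h0, hn', heq⟩ := chainSet_extend_len (b := x) hrmem
    exact ⟨n, p, hn1, h0, hn', by rw [← heq]; linarith⟩
  by_cases hA : ∃ (n : ℕ) (p : ℕ → X), 1 ≤ n ∧ p 0 = x ∧ p n = x ∧
      (∑ i ∈ Finset.range n, c (p i) (p (i+1))) + n * α ≤ 0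
  · -- CASE A : an exact minimizing loop exists
    obtain ⟨n, p, hn1, hp0, hpn, hvle⟩ := hA
    have hval0 : (∑ i ∈ Finset.range n, c (p i) (p (i+1))) + n * α = 0 :=
      le_antisymm hvle (loop_nonneg hu₀ hp0 hpn)
    set z : ℤ → X := fun i => p ((i % (n:ℤ)).toNat) with hzdef
    set g : ℤ → ℝ := fun i => c (z i) (z (i+1)) + α with hgdef
    have hg : ∀ i, g i = c (z i) (z (i+1)) + α := fun i => rfl
    have hzper : ∀ i : ℤ, z (i + n) = z i := fun i => by
      simp only [hzdef]; rw [per_shift]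
    have hz0 : ∀ k : ℤ, z ((n:ℤ) * k) = x := fun k => by
      simp only [hzdef]; rw [per_mul]; exact hp0
    have hznat : ∀ t : ℕ, t ≤ n → z t = p t := fun t ht => by
      simp only [hzdef]; exact per_nat hn1 hp0 hpn t ht
    have hgper : ∀ i : ℤ, g (i + n) = g i := by
      intro i
      simp only [hgdef]
      rw [hzper i, show i + (n:ℤ) + 1 = (i+1) + n by ring, hzper (i+1)]
    have hsum00 : ∑ l ∈ Finset.range n, g ((0:ℤ) + l) = 0 := by
      have hcongr : ∀ l ∈ Finset.range n, g ((0:ℤ) + l) = c (p l) (p (l+1)) + α := by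
        intro l hl
        rw [Finset.mem_range] at hl
        simp only [hgdef]
        rw [show ((0:ℤ) + l) = (l:ℤ) by ring]
        rw [hznat l (by omega), show ((l:ℤ) + 1) = ((l+1:ℕ):ℤ) by push_cast; ring,
          hznat (l+1) (by omega)]
      rw [Finset.sum_congr rfl hcongr, Finset.sum_add_distrib, Finset.sum_const,
        Finset.card_range, nsmul_eq_mul]
      exact hval0
    have key : ∀ m : ℤ, (∑ l ∈ Finset.range n, g ((m+1) + l)) = ∑ l ∈ Finset.range n, g (m + l) := by
      intro m
      obtain ⟨n', hn'⟩ : ∃ n', n = n' + 1 := ⟨n - 1, by omega⟩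
      subst hn'
      rw [Finset.sum_range_succ, Finset.sum_range_succ']
      have e2 : ∀ l : ℕ, (m + ((l+1:ℕ):ℤ)) = (m+1) + l := by intro l; push_cast; ring
      rw [Finset.sum_congr rfl (fun l _ => congrArg g (e2 l))]
      have e3 : g (m + ((0:ℕ):ℤ)) = g m := by norm_num
      have e1 : m + 1 + ((n':ℕ):ℤ) = m + ((n'+1:ℕ):ℤ) := by push_cast; ring
      rw [e3, e1, hgper m]
    have hshift : ∀ m : ℤ, (∑ l ∈ Finset.range n, g (m + l)) = 0 := by
      intro m
      induction m using Int.induction_on with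
      | zero => exact hsum00
      | succ i ih => rw [key i]; exact ih
      | pred i ih =>
          have hk := key (-(i:ℤ) - 1)
          rw [show (-(i:ℤ) - 1 + 1) = -(i:ℤ) by ring] at hk
          rw [hk] at ih
          exact ih
    have hA0 : ∀ k : ℤ, intA g ((n:ℤ) * k) = 0 := by
      intro k
      induction k using Int.induction_on with
      | zero => rw [mul_zero]; exact intA_zero g
      | succ i ih =>
          have hw := intA_window g ((n:ℤ) * i) n
          rw [hshift ((n:ℤ)*i), ih] at hw
          rw [show (n:ℤ) * ((i:ℤ)+1) = (n:ℤ)*i + ((n:ℕ):ℤ) by push_cast; ring, hw]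
          ring
      | pred i ih =>
          have hw := intA_window g ((n:ℤ) * (-(i:ℤ)-1)) n
          rw [hshift ((n:ℤ)*(-(i:ℤ)-1))] at hw
          rw [show (n:ℤ) * (-(i:ℤ)-1) + ((n:ℕ):ℤ) = (n:ℤ)*(-(i:ℤ)) by push_cast; ring] at hw
          rw [ih] at hw
          linarith
    refine ⟨z, intA g, ?_, intA_zero g, fun i => intA_succ g i, fun i => ⟨?_, ?_⟩⟩
    · have := hz0 0; rwa [mul_zero] at this
    · -- pot x (z i) ≤ intA g i
      obtain ⟨M, hM⟩ : ∃ M : ℤ, M = (n:ℤ) * (i / (n:ℤ)) := ⟨_, rfl⟩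
      have hMeq : M + i % (n:ℤ) = i := by rw [hM]; exact Int.mul_ediv_add_emod i n
      have hmod0 : 0 ≤ i % (n:ℤ) := Int.emod_nonneg i (by omega)
      have hmodlt : i % (n:ℤ) < n := Int.emod_lt_of_pos i (by exact_mod_cast hn1)
      have hML : M + (((i - M).toNat : ℕ) : ℤ) = i := by omega
      have hmem := seq_chain_mem (α := α) hg M (i - M).toNat
      rw [hML] at hmem
      have hzM : z M = x := by rw [hM]; exact hz0 _
      have hAM : intA g M = 0 := by rw [hM]; exact hA0 _
      rw [hzM, hAM, sub_zero] at hmem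
      exact pot_le hu₀ hmem
    · -- pot (z i) x ≤ - intA g i
      obtain ⟨M, hM⟩ : ∃ M : ℤ, M = (n:ℤ) * (i / (n:ℤ)) := ⟨_, rfl⟩
      have hMeq : M + i % (n:ℤ) = i := by rw [hM]; exact Int.mul_ediv_add_emod i n
      have hmod0 : 0 ≤ i % (n:ℤ) := Int.emod_nonneg i (by omega)
      have hmodlt : i % (n:ℤ) < n := Int.emod_lt_of_pos i (by exact_mod_cast hn1)
      have hML : i + (((M + n - i).toNat : ℕ) : ℤ) = M + n := by omega
      have hmem := seq_chain_mem (α := α) hg i (M + n - i).toNat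
      rw [hML] at hmem
      have hzN : z (M + (n:ℤ)) = x := by
        rw [show M + (n:ℤ) = (n:ℤ) * (i / (n:ℤ) + 1) by rw [hM]; ring]
        exact hz0 _
      have hAN : intA g (M + (n:ℤ)) = 0 := by
        rw [show M + (n:ℤ) = (n:ℤ) * (i / (n:ℤ) + 1) by rw [hM]; ring]
        exact hA0 _
      rw [hzN, hAN, zero_sub] at hmem
      exact pot_le hu₀ hmem
  · -- CASE B : no exact minimizing loop; take limits of almost-minimizing loops
    push_neg at hA
    obtain ⟨U, hU⟩ := Filter.exists_ultrafilter_le (Filter.atTop : Filter ℕ)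
    have hone : ∀ j : ℕ, (0:ℝ) < 1/((j:ℝ)+1) := fun j => by positivity
    have hone1 : ∀ j : ℕ, 1/((j:ℝ)+1) ≤ 1 := fun j => by
      rw [div_le_one (by positivity)]; linarith [Nat.cast_nonneg (α := ℝ) j]
    have htinv : Filter.Tendsto (fun j : ℕ => 1/((j:ℝ)+1)) U (𝓝 0) :=
      tendsto_one_div_add_atTop_nhds_zero_nat.mono_left hU
    have hQ : ∀ m : ℕ, ∃ δ : ℝ, 0 < δ ∧ (1 ≤ m → ∀ p : ℕ → X, p 0 = x → p m = x →
        δ ≤ (∑ i ∈ Finset.range m, c (p i) (p (i+1))) + m * α) := by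
      intro m
      by_cases hm : 1 ≤ m
      · by_contra hcon
        push_neg at hcon
        have hsel : ∀ j : ℕ, ∃ p : ℕ → X, p 0 = x ∧ p m = x ∧
            (∑ i ∈ Finset.range m, c (p i) (p (i+1))) + m * α < 1/((j:ℝ)+1) :=
          fun j => (hcon (1/((j:ℝ)+1)) (hone j)).2
        choose q hq0 hqm hqv using hsel
        set q' : ℕ → ℕ → X := fun j l => q j (min l m) with hq'def
        have hq'0 : ∀ j, q' j 0 = x := fun j => by
          simp only [hq'def]; rw [min_eq_left (Nat.zero_le m)]; exact hq0 j
        have hq'm : ∀ j, q' j m = x := fun j => by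
          simp only [hq'def]; rw [min_self]; exact hqm j
        have hq'sum : ∀ j, ∑ l ∈ Finset.range m, c (q' j l) (q' j (l+1))
            = ∑ l ∈ Finset.range m, c (q j l) (q j (l+1)) := by
          intro j
          refine Finset.sum_congr rfl (fun l hl => ?_)
          rw [Finset.mem_range] at hl
          simp only [hq'def]
          rw [min_eq_left (by omega), min_eq_left (by omega)]
        have hq'v : ∀ j, (∑ l ∈ Finset.range m, c (q' j l) (q' j (l+1))) + m * α < 1/((j:ℝ)+1) :=
          fun j => by rw [hq'sum j]; exact hqv j
        have hq'v0 : ∀ j, 0 ≤ (∑ l ∈ Finset.range m, c (q' j l) (q' j (l+1))) + m * α :=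
          fun j => loop_nonneg hu₀ (hq'0 j) (hq'm j)
        have hstepq : ∀ j l, l < m → dist (q' j l) (q' j (l+1)) ≤ R₀ := by
          intro j l hl
          refine hdefect m (q' j) (hq'0 j) (hq'm j) ?_ l hl
          linarith [hq'v j, hone1 j]
        have hballq : ∀ j l, dist x (q' j l) ≤ (m:ℝ) * R₀ := by
          intro j l
          have hble : ∀ t : ℕ, t ≤ m → dist x (q' j t) ≤ (t:ℝ) * R₀ := by
            intro t
            induction t with
            | zero => intro _; rw [hq'0 j]; simp
            | succ t ih =>
                intro ht
                have h1 := ih (by omega)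
                have h2 := hstepq j t (by omega)
                have h3 := dist_triangle x (q' j t) (q' j (t+1))
                push_cast
                push_cast at h1
                linarith
          by_cases hlm : l ≤ m
          · have := hble l hlm
            have h4 : (l:ℝ) * R₀ ≤ (m:ℝ) * R₀ := by
              apply mul_le_mul_of_nonneg_right _ hR₀0
              exact_mod_cast hlm
            linarith
          · have : q' j l = x := by
              simp only [hq'def]; rw [min_eq_right (by omega)]; exact hqm j
            rw [this]
            simp
            positivity
        have hlb : ∀ l : ℕ, ∃ a, Filter.Tendsto (fun j => q' j l) U (𝓝 a) := fun l =>
          ulim U (isCompact_closedBall x ((m:ℝ) * R₀)) (fun j => by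
            rw [Metric.mem_closedBall, dist_comm]; exact hballq j l)
        choose b hb using hlb
        have hb0 : b 0 = x := by
          refine tendsto_nhds_unique (hb 0) ?_
          simp only [hq'0]
          exact tendsto_const_nhds
        have hbm : b m = x := by
          refine tendsto_nhds_unique (hb m) ?_
          simp only [hq'm]
          exact tendsto_const_nhds
        have hvt1 : Filter.Tendsto
            (fun j => (∑ l ∈ Finset.range m, c (q' j l) (q' j (l+1))) + m * α) U
            (𝓝 ((∑ l ∈ Finset.range m, c (b l) (b (l+1))) + m * α)) := by
          refine Filter.Tendsto.add ?_ tendsto_const_nhds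
          refine tendsto_finset_sum _ (fun l _ => ?_)
          exact (hcont.tendsto (b l, b (l+1))).comp ((hb l).prodMk_nhds (hb (l+1)))
        have hvt2 : Filter.Tendsto
            (fun j => (∑ l ∈ Finset.range m, c (q' j l) (q' j (l+1))) + m * α) U (𝓝 0) := by
          refine tendsto_of_tendsto_of_tendsto_of_le_of_le tendsto_const_nhds htinv
            (fun j => hq'v0 j) (fun j => le_of_lt (hq'v j))
        have hbv : (∑ l ∈ Finset.range m, c (b l) (b (l+1))) + m * α = 0 :=
          tendsto_nhds_unique hvt1 hvt2
        have := hA m b hm hb0 hbm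
        linarith
      · exact ⟨1, one_pos, fun h => absurd h hm⟩
    choose δ hδ0 hδb using hQ
    have hsel2 : ∀ j : ℕ, ∃ (nn : ℕ) (p : ℕ → X), j + 1 ≤ nn ∧ p 0 = x ∧ p nn = x ∧
        (∑ i ∈ Finset.range nn, c (p i) (p (i+1))) + nn * α < 1/((j:ℝ)+1) := by
      intro j
      have hεpos : (0:ℝ) < min (1/((j:ℝ)+1)) ((Finset.range (j+1)).inf' ⟨0, by simp⟩ δ) := by
        refine lt_min (hone j) ?_
        refine (Finset.lt_inf'_iff _).2 ?_
        exact fun l _ => hδ0 l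
      obtain ⟨nn, p, h1, h0, hxx, hv⟩ := hloops _ hεpos
      refine ⟨nn, p, ?_, h0, hxx, lt_of_lt_of_le hv (min_le_left _ _)⟩
      by_contra hc
      push_neg at hc
      have h2 : δ nn ≤ (∑ i ∈ Finset.range nn, c (p i) (p (i+1))) + nn * α :=
        hδb nn h1 p h0 hxx
      have h3 : min (1/((j:ℝ)+1)) ((Finset.range (j+1)).inf' ⟨0, by simp⟩ δ) ≤ δ nn :=
        le_trans (min_le_right _ _) (Finset.inf'_le δ (Finset.mem_range.mpr (by omega)))
      linarith
    choose nseq pseq hjn hp0 hpn hpv using hsel2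
    have hn1 : ∀ j, 1 ≤ nseq j := fun j => le_trans (by omega) (hjn j)
    set val : ℕ → ℝ :=
      fun j => (∑ l ∈ Finset.range (nseq j), c (pseq j l) (pseq j (l+1))) + (nseq j) * α
      with hvaldef
    have hval0 : ∀ j, 0 ≤ val j := fun j => loop_nonneg hu₀ (hp0 j) (hpn j)
    have hvt : Filter.Tendsto val U (𝓝 0) :=
      tendsto_of_tendsto_of_tendsto_of_le_of_le tendsto_const_nhds htinv
        (fun j => hval0 j) (fun j => le_of_lt (hpv j))
    set zj : ℕ → ℤ → X := fun j i => pseq j ((i % ((nseq j : ℕ):ℤ)).toNat) with hzjdef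
    have hzj0 : ∀ j, zj j 0 = x := fun j => by
      simp only [hzjdef]; rw [Int.zero_emod]; exact hp0 j
    have hzjper : ∀ j i, zj j (i + (nseq j :ℕ)) = zj j i := fun j i => by
      simp only [hzjdef]; rw [per_shift]
    have hzjnat : ∀ j (t : ℕ), t ≤ nseq j → zj j t = pseq j t := fun j t ht => by
      simp only [hzjdef]; exact per_nat (hn1 j) (hp0 j) (hpn j) t ht
    have hzjstep : ∀ j i, ∃ l : ℕ, l < nseq j ∧ zj j i = pseq j l ∧ zj j (i+1) = pseq j (l+1) :=
      fun j i => by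
        simp only [hzjdef]; exact per_step (hn1 j) (hp0 j) (hpn j) i
    have hstepbd : ∀ j i, dist (zj j i) (zj j (i+1)) ≤ R₀ := by
      intro j i
      obtain ⟨l, hl, e1, e2⟩ := hzjstep j i
      rw [e1, e2]
      refine hdefect (nseq j) (pseq j) (hp0 j) (hpn j) ?_ l hl
      linarith [hpv j, hone1 j]
    have hball : ∀ (i : ℤ) (j : ℕ), dist x (zj j i) ≤ (i.natAbs : ℝ) * R₀ := by
      intro i
      induction i using Int.induction_on with
      | zero => intro j; rw [hzj0 j]; simp
      | succ i ih =>
          intro j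
          have h1 := dist_triangle x (zj j i) (zj j ((i:ℤ)+1))
          have h2 := hstepbd j i
          have h3 : ((((i:ℤ)+1).natAbs : ℕ) : ℝ) = (i:ℝ) + 1 := by
            rw [show ((i:ℤ)+1) = ((i+1 : ℕ) : ℤ) by push_cast; ring, Int.natAbs_natCast]
            push_cast; ring
          have h4 : ((((i:ℤ)).natAbs : ℕ) : ℝ) = (i:ℝ) := by rw [Int.natAbs_natCast]
          rw [h3]
          rw [h4] at ih
          linarith [ih j]
      | pred i ih =>
          intro j
          have h1 := dist_triangle x (zj j (-(i:ℤ))) (zj j (-(i:ℤ)-1))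
          have h2 := hstepbd j (-(i:ℤ)-1)
          rw [show (-(i:ℤ)-1+1) = -(i:ℤ) by ring] at h2
          have h2' : dist (zj j (-(i:ℤ))) (zj j (-(i:ℤ)-1)) ≤ R₀ := by
            rw [dist_comm]; exact h2
          have h3 : (((-(i:ℤ)-1).natAbs : ℕ) : ℝ) = (i:ℝ) + 1 := by
            have : (-(i:ℤ)-1).natAbs = i + 1 := by omega
            rw [this]; push_cast; ring
          have h4 : (((-(i:ℤ)).natAbs : ℕ) : ℝ) = (i:ℝ) := by
            have : (-(i:ℤ)).natAbs = i := by omega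
            rw [this]
          rw [h3]
          rw [h4] at ih
          linarith [ih j]
    have hlimy : ∀ i : ℤ, ∃ a, Filter.Tendsto (fun j => zj j i) U (𝓝 a) := fun i =>
      ulim U (isCompact_closedBall x ((i.natAbs : ℝ) * R₀)) (fun j => by
        rw [Metric.mem_closedBall, dist_comm]; exact hball i j)
    choose y hy using hlimy
    have hy0 : y 0 = x := by
      refine tendsto_nhds_unique (hy 0) ?_
      simp only [hzj0]
      exact tendsto_const_nhds
    set g : ℤ → ℝ := fun i => c (y i) (y (i+1)) + α with hgdef
    have hg : ∀ i, g i = c (y i) (y (i+1)) + α := fun _ => rfl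
    set gj : ℕ → ℤ → ℝ := fun j i => c (zj j i) (zj j (i+1)) + α with hgjdef
    have hgj : ∀ j, ∀ i, gj j i = c (zj j i) (zj j (i+1)) + α := fun _ _ => rfl
    have hcc : ∀ {f f' : ℕ → X} {a a' : X}, Filter.Tendsto f U (𝓝 a) →
        Filter.Tendsto f' U (𝓝 a') →
        Filter.Tendsto (fun j => c (f j) (f' j)) U (𝓝 (c a a')) := by
      intro f f' a a' hf hf'
      exact (hcont.tendsto (a, a')).comp (hf.prodMk_nhds hf')
    have htg : ∀ i i' : ℤ, Filter.Tendsto (fun j => c (zj j i) (zj j i')) U (𝓝 (c (y i) (y i'))) :=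
      fun i i' => hcc (hy i) (hy i')
    have htA : ∀ i : ℤ, Filter.Tendsto (fun j => intA (gj j) i) U (𝓝 (intA g i)) := by
      intro i
      have h2 : Filter.Tendsto (fun j => ∑ l ∈ Finset.range i.toNat, gj j l) U
          (𝓝 (∑ l ∈ Finset.range i.toNat, g l)) := by
        refine tendsto_finset_sum _ (fun l _ => ?_)
        simp only [hgjdef, hgdef]
        exact (htg l ((l:ℤ)+1)).add tendsto_const_nhds
      have h3 : Filter.Tendsto (fun j => ∑ l ∈ Finset.range (-i).toNat, gj j (i + l)) U
          (𝓝 (∑ l ∈ Finset.range (-i).toNat, g (i + l))) := by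
        refine tendsto_finset_sum _ (fun l _ => ?_)
        simp only [hgjdef, hgdef]
        exact (htg (i+l) (i+l+1)).add tendsto_const_nhds
      exact h2.sub h3
    have hpersum : ∀ j, intA (gj j) ((nseq j : ℕ) : ℤ) = val j := by
      intro j
      have hw := intA_window (gj j) 0 (nseq j)
      rw [intA_zero, zero_add, zero_add] at hw
      rw [hw]
      have hcongr : ∀ l ∈ Finset.range (nseq j),
          gj j ((0:ℤ) + l) = c (pseq j l) (pseq j (l+1)) + α := by
        intro l hl
        rw [Finset.mem_range] at hl
        simp only [hgjdef]
        rw [show ((0:ℤ)+l) = (l:ℤ) by ring, hzjnat j l (by omega),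
          show ((l:ℤ)+1) = ((l+1:ℕ):ℤ) by push_cast; ring, hzjnat j (l+1) (by omega)]
      rw [Finset.sum_congr rfl hcongr, Finset.sum_add_distrib, Finset.sum_const,
        Finset.card_range, nsmul_eq_mul]
    have hneg : ∀ j, intA (gj j) (-((nseq j : ℕ):ℤ)) = -(val j) := by
      intro j
      have hw := intA_window (gj j) (-((nseq j:ℕ):ℤ)) (nseq j)
      rw [show (-((nseq j:ℕ):ℤ) + ((nseq j:ℕ):ℤ)) = 0 by ring, intA_zero] at hw
      have hcongr : ∀ l ∈ Finset.range (nseq j),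
          gj j (-((nseq j:ℕ):ℤ) + l) = c (pseq j l) (pseq j (l+1)) + α := by
        intro l hl
        rw [Finset.mem_range] at hl
        simp only [hgjdef]
        have e1 : zj j (-((nseq j:ℕ):ℤ) + l) = pseq j l := by
          have h5 := hzjper j (-((nseq j:ℕ):ℤ) + l)
          rw [show (-((nseq j:ℕ):ℤ) + l + (nseq j:ℕ)) = (l:ℤ) by ring] at h5
          rw [← h5, hzjnat j l (by omega)]
        have e2 : zj j (-((nseq j:ℕ):ℤ) + l + 1) = pseq j (l+1) := by
          have h5 := hzjper j (-((nseq j:ℕ):ℤ) + l + 1)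
          rw [show (-((nseq j:ℕ):ℤ) + l + 1 + (nseq j:ℕ)) = ((l+1:ℕ):ℤ) by push_cast; ring] at h5
          rw [← h5, hzjnat j (l+1) (by omega)]
        rw [e1, e2]
      rw [Finset.sum_congr rfl hcongr, Finset.sum_add_distrib, Finset.sum_const,
        Finset.card_range, nsmul_eq_mul] at hw
      have : val j = (∑ l ∈ Finset.range (nseq j), c (pseq j l) (pseq j (l+1)))
          + (nseq j) * α := rfl
      linarith
    have hG1 : ∀ i : ℤ, pot c α x (y i) ≤ intA g i := by
      intro i
      have htW : Filter.Tendsto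
          (fun j => intA (gj j) i + val j - c (zj j (i-1)) (zj j i) + c (zj j (i-1)) (y i))
          U (𝓝 (intA g i)) := by
        have h1 := (((htA i).add hvt).sub (htg (i-1) i)).add (hcc (hy (i-1)) (tendsto_const_nhds (x := y i)))
        have e : intA g i + 0 - c (y (i-1)) (y i) + c (y (i-1)) (y i) = intA g i := by ring
        rw [e] at h1
        exact h1
      have hev : ∀ᶠ j in U, (i.natAbs + 2 : ℕ) ≤ nseq j + 1 := by
        have h1 : ∀ᶠ j in Filter.atTop, (i.natAbs + 2 : ℕ) ≤ j + 1 + 1 :=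
          Filter.eventually_atTop.mpr ⟨i.natAbs + 1, fun j hj => by omega⟩
        have h2 : ∀ᶠ j in (U : Filter ℕ), (i.natAbs + 2 : ℕ) ≤ j + 1 + 1 := hU h1
        exact h2.mono (fun j hj => by have := hjn j; omega)
      have hWmem : ∀ᶠ j in U,
          intA (gj j) i + val j - c (zj j (i-1)) (zj j i) + c (zj j (i-1)) (y i)
            ∈ chainSet c α x (y i) := by
        refine hev.mono (fun j hj => ?_)
        have hL1 : 1 ≤ (i + ((nseq j:ℕ):ℤ)).toNat := by omega
        have hmem := chain_replace_last (α := α) (hgj j) (-((nseq j:ℕ):ℤ)) hL1 (y i)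
        have e1 : (-((nseq j:ℕ):ℤ)) + (((i + ((nseq j:ℕ):ℤ)).toNat : ℕ) : ℤ) = i := by omega
        rw [e1] at hmem
        have hzm : zj j (-((nseq j:ℕ):ℤ)) = x := by
          have h5 := hzjper j (-((nseq j:ℕ):ℤ))
          rw [show (-((nseq j:ℕ):ℤ) + ((nseq j:ℕ):ℤ)) = 0 by ring] at h5
          rw [← h5]
          exact hzj0 j
        rw [hzm, hneg j, sub_neg_eq_add] at hmem
        exact hmem
      exact ge_of_tendsto htW (hWmem.mono (fun j hj => pot_le hu₀ hj))
    have hG2 : ∀ i : ℤ, pot c α (y i) x ≤ -(intA g i) := by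
      intro i
      by_cases hi : 0 ≤ i
      · have htW : Filter.Tendsto
            (fun j => c (y i) (zj j (i+1)) + (val j - intA (gj j) (i+1)) + α)
            U (𝓝 (-(intA g i))) := by
          have h1 := ((hcc (tendsto_const_nhds (x := y i)) (hy (i+1))).add (hvt.sub (htA (i+1)))).add
            (tendsto_const_nhds (x := α))
          have e : c (y i) (y (i+1)) + (0 - intA g (i+1)) + α = -(intA g i) := by
            rw [intA_succ g i, hg i]; ring
          rw [e] at h1
          exact h1
        have hev : ∀ᶠ j in U, (i.natAbs + 2 : ℕ) ≤ nseq j + 1 := by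
          have h1 : ∀ᶠ j in Filter.atTop, (i.natAbs + 2 : ℕ) ≤ j + 1 + 1 :=
            Filter.eventually_atTop.mpr ⟨i.natAbs + 1, fun j hj => by omega⟩
          have h2 : ∀ᶠ j in (U : Filter ℕ), (i.natAbs + 2 : ℕ) ≤ j + 1 + 1 := hU h1
          exact h2.mono (fun j hj => by have := hjn j; omega)
        have hWmem : ∀ᶠ j in U,
            c (y i) (zj j (i+1)) + (val j - intA (gj j) (i+1)) + α
              ∈ chainSet c α (y i) x := by
          refine hev.mono (fun j hj => ?_)
          have hL1 : 1 ≤ (((nseq j:ℕ):ℤ) - i).toNat := by omega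
          have hmem := chain_replace_first (α := α) (hgj j) i hL1 (y i)
          have e1 : i + ((((((nseq j:ℕ):ℤ) - i).toNat) : ℕ) : ℤ) = ((nseq j:ℕ):ℤ) := by omega
          rw [e1] at hmem
          have hzn : zj j ((nseq j : ℕ) : ℤ) = x := by
            rw [hzjnat j (nseq j) le_rfl]; exact hpn j
          rw [hzn, hpersum j] at hmem
          exact hmem
        exact ge_of_tendsto htW (hWmem.mono (fun j hj => pot_le hu₀ hj))
      · push_neg at hi
        have htW : Filter.Tendsto
            (fun j => c (y i) (zj j (i+1)) + (0 - intA (gj j) (i+1)) + α)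
            U (𝓝 (-(intA g i))) := by
          have h1 := ((hcc (tendsto_const_nhds (x := y i)) (hy (i+1))).add
            ((tendsto_const_nhds (x := (0:ℝ))).sub (htA (i+1)))).add
            (tendsto_const_nhds (x := α))
          have e : c (y i) (y (i+1)) + (0 - intA g (i+1)) + α = -(intA g i) := by
            rw [intA_succ g i, hg i]; ring
          rw [e] at h1
          exact h1
        have hWmem : ∀ᶠ j in U,
            c (y i) (zj j (i+1)) + (0 - intA (gj j) (i+1)) + α
              ∈ chainSet c α (y i) x := by
          refine Filter.Eventually.of_forall (fun j => ?_)
          have hL1 : 1 ≤ ((0:ℤ) - i).toNat := by omega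
          have hmem := chain_replace_first (α := α) (hgj j) i hL1 (y i)
          have e1 : i + (((((0:ℤ) - i).toNat) : ℕ) : ℤ) = 0 := by omega
          rw [e1] at hmem
          rw [hzj0 j, intA_zero] at hmem
          exact hmem
        exact ge_of_tendsto htW (hWmem.mono (fun j hj => pot_le hu₀ hj))
    exact ⟨y, intA g, hy0, intA_zero g, fun i => by rw [intA_succ g i, hg i],
      fun i => ⟨hG1 i, hG2 i⟩⟩


private lemma LHS_of_P [ProperSpace X] {B K : ℝ} (hK : 0 < K)
    (hlen : IsBLengthSpaceAtScale X B K)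
    (hcont : Continuous fun q : X × X => c q.1 q.2)
    (hsl : UniformlySuperlinear c) (hub : UniformlyBounded c) (x : X)
    (hP : ∀ ε > 0, ∃ z : X, pot c (critValue c) x z + c z x + critValue c < ε) :
    x ∈ projAubrySet c := by
  obtain ⟨y, A, hy0, hA0, hrec, hpots⟩ := construct hK hlen hcont hsl hub x hP
  intro u hu
  have hval : ∀ i, u (y i) = u x + A i := by
    intro i
    have h1 : u (y i) - u x ≤ A i := le_trans (le_pot hu x (y i)) (hpots i).1
    have h2 : u x - u (y i) ≤ -A i := le_trans (le_pot hu (y i) x) (hpots i).2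
    linarith
  have hwin : ∀ (m : ℤ) (k : ℕ), A (m + k)
      = A m + ∑ i ∈ Finset.range k, (c (y (m+i)) (y (m+i+1)) + critValue c) := by
    intro m k
    induction k with
    | zero => simp
    | succ k ih =>
        have hcast : (m + (k+1 : ℕ) : ℤ) = (m + k) + 1 := by push_cast; ring
        rw [hcast, hrec, ih, Finset.sum_range_succ]
        ring
  refine ⟨y, ?_, hy0⟩
  intro m k
  rw [hval (m + k), hval m, hwin m k, Finset.sum_add_distrib, Finset.sum_const,
    Finset.card_range, nsmul_eq_mul]
  ring

end AubryAux

theorem aubry_iff_mane_weak_KAM {X : Type*} [MetricSpace X] [Nonempty X] [ProperSpace X]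
    {B K : ℝ} (hB : 1 ≤ B) (hK : 0 < K) (hlen : IsBLengthSpaceAtScale X B K)
    {c : X → X → ℝ} (hcont : Continuous fun q : X × X => c q.1 q.2)
    (hsl : UniformlySuperlinear c) (hub : UniformlyBounded c) (x : X) :
    x ∈ projAubrySet c ↔ ∀ y : X, mane c x y = Tm c (mane c x) y + critValue c := by
  constructor
  · intro hx
    exact RHS_of_P hsl x (P_of_LHS hsl x hx)
  · intro h
    exact LHS_of_P hK hlen hcont hsl hub x (P_of_RHS hsl x (h x))
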